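/- Uniqueness of highest weight element in type A: if x = (x₁, …, x_k, 0, 0, …) ∈ R(λ) satisfies ẽ_l x = 0 for all l ∈ I, then x = r_λ = (∅₁^{m₁}, …, ∅_n^{m_n}, 0, …). -/

import Mathlib

attribute [local instance] Classical.propDecidable

noncomputable section

namespace CrystalSeq

/-- an element of `𝓡^∞`: the (finite) list of its non-zero components, each component
recorded together with its superscript `i` (so `(i, L)` stands for an element of `⋃ₛ R^i_s`). -/
abbrev RSeq := List (ℤ × List (ℤ × ℤ))

def firsts (L : List (ℤ × ℤ)) : List ℤ := L.map Prod.fst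
def seconds (L : List (ℤ × ℤ)) : List ℤ := L.map Prod.snd

/-- `L ∈ ⋃ₛ R^i_s`.  Entries are encoded as integers: `v` with `1 ≤ v ≤ n` is the letter `v`,
and (in type `C`) `v` with `n < v ≤ 2n-1` is the barred letter `bar (2n - v)`, so that the
bar map is `v ↦ 2n - v` and `max I = 2n - 1`.  The flag is `t = true` for type `Cₙ` and
`t = false` for type `Aₙ` (where `max I = n` and there are no barred letters).
The conditions are `1 ≤ i_s < ⋯ < i₁ ≤ i ≤ i₁' < ⋯ < i_s' ≤ max I` and `i_j' ≤ bar i_j`. -/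
def InR (t : Bool) (n : ℕ) (i : ℤ) (L : List (ℤ × ℤ)) : Prop :=
  List.Chain' (fun p q => q.1 < p.1 ∧ p.2 < q.2) L ∧
  ∀ p ∈ L, 1 ≤ p.1 ∧ p.1 ≤ i ∧ i ≤ p.2 ∧
    p.2 ≤ (if t then 2 * (n : ℤ) - 1 else (n : ℤ)) ∧
    (t = true → p.2 ≤ 2 * (n : ℤ) - p.1)

/-- property (a) of Section 3 -/
def condA (t : Bool) (n : ℕ) (i l : ℤ) (L : List (ℤ × ℤ)) : Prop :=
  l ∉ firsts L ∧ l ∉ seconds L ∧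
  (l < i → l + 1 ∈ firsts L) ∧ (i < l → l - 1 ∈ seconds L) ∧
  (t = true → (2 * (n : ℤ) - l - 1 ∈ seconds L ∨ 2 * (n : ℤ) - l ∉ seconds L))

/-- property (a') of Section 3 (only meaningful in type `C`) -/
def condA' (t : Bool) (n : ℕ) (i l : ℤ) (L : List (ℤ × ℤ)) : Prop :=
  t = true ∧ l ∉ firsts L ∧ l ∉ seconds L ∧
  (l < i → l + 1 ∈ firsts L) ∧ (i < l → l - 1 ∈ seconds L) ∧
  (2 * (n : ℤ) - l - 1 ∈ seconds L ∧ 2 * (n : ℤ) - l ∉ seconds L)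

/-- property (b) of Section 3 -/
def condB (t : Bool) (n : ℕ) (i l : ℤ) (L : List (ℤ × ℤ)) : Prop :=
  t = true ∧ 2 * (n : ℤ) - l ∉ seconds L ∧ 2 * (n : ℤ) - l - 1 ∈ seconds L ∧
  (l < i → (l + 1 ∉ firsts L ∨ l ∈ firsts L)) ∧
  (i < l → (l - 1 ∉ seconds L ∨ l ∈ seconds L)) ∧
  (l = i → ∃ p, L.head? = some p ∧ (p.1 = l ∨ p.2 = l))

/-- property (c) of Section 3 -/
def condC (t : Bool) (n : ℕ) (i l : ℤ) (L : List (ℤ × ℤ)) : Prop :=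
  (l ∈ firsts L ∨ l ∈ seconds L) ∧
  (l < i → l + 1 ∉ firsts L) ∧ (i < l → l - 1 ∉ seconds L) ∧
  (l = i → L.head? = some (l, l)) ∧
  (t = true → (2 * (n : ℤ) - l - 1 ∈ seconds L ∨ 2 * (n : ℤ) - l ∉ seconds L))

/-- property (d) of Section 3 (only meaningful in type `C`) -/
def condD (t : Bool) (n : ℕ) (i l : ℤ) (L : List (ℤ × ℤ)) : Prop :=
  t = true ∧ 2 * (n : ℤ) - l ∈ seconds L ∧ 2 * (n : ℤ) - l - 1 ∉ seconds L ∧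
  (l < i → (l + 1 ∉ firsts L ∨ l ∈ firsts L)) ∧
  (i < l → (l - 1 ∉ seconds L ∨ l ∈ seconds L)) ∧
  (l = i → ∃ p, L.head? = some p ∧ (p.1 = l ∨ p.2 = l))

/-- property (d') of Section 3: (d) with every `∨` replaced by `∧` -/
def condD' (t : Bool) (n : ℕ) (i l : ℤ) (L : List (ℤ × ℤ)) : Prop :=
  t = true ∧ 2 * (n : ℤ) - l ∈ seconds L ∧ 2 * (n : ℤ) - l - 1 ∉ seconds L ∧
  (l < i → (l + 1 ∉ firsts L ∧ l ∈ firsts L)) ∧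
  (i < l → (l - 1 ∉ seconds L ∧ l ∈ seconds L)) ∧
  (l = i → ∃ p, L.head? = some p ∧ p.1 = l ∧ p.2 = l)

/-- the raw modification underlying `θ_l` in case (a): replace `l+1` by `l` (if `l < i`),
replace `l-1` by `l` (if `l > i`), or add the pair `(l,l)` (if `l = i`). -/
def thetaRaw (i l : ℤ) (L : List (ℤ × ℤ)) : List (ℤ × ℤ) :=
  if l < i then L.map (fun p => if p.1 = l + 1 then (l, p.2) else p)
  else if i < l then L.map (fun p => if p.2 = l - 1 then (p.1, l) else p)
  else (l, l) :: L

/-- replace `bar (l+1)` by `bar l` (case (b) of `θ_l`) -/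
def barUp (n : ℕ) (l : ℤ) (L : List (ℤ × ℤ)) : List (ℤ × ℤ) :=
  L.map (fun p => if p.2 = 2 * (n : ℤ) - l - 1 then (p.1, 2 * (n : ℤ) - l) else p)

/-- the map `θ_l : ⋃ₛ R^i_s → ⋃ₛ R^i_s ∪ {0}` -/
def theta (t : Bool) (n : ℕ) (i l : ℤ) (L : List (ℤ × ℤ)) : Option (List (ℤ × ℤ)) :=
  if condA t n i l L then some (thetaRaw i l L)
  else if condB t n i l L then some (barUp n l L)
  else none

/-- the raw modification underlying `ρ_l` in case (c): replace `l` by `l+1` (if `l < i`),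
replace `l` by `l-1` (if `l > i`), or erase the pair `(l,l)` (if `l = i`). -/
def rhoRaw (i l : ℤ) (L : List (ℤ × ℤ)) : List (ℤ × ℤ) :=
  if l < i then L.map (fun p => if p.1 = l then (l + 1, p.2) else p)
  else if i < l then L.map (fun p => if p.2 = l then (p.1, l - 1) else p)
  else L.erase (l, l)

/-- replace `bar l` by `bar (l+1)` (case (d) of `ρ_l`) -/
def barDown (n : ℕ) (l : ℤ) (L : List (ℤ × ℤ)) : List (ℤ × ℤ) :=
  L.map (fun p => if p.2 = 2 * (n : ℤ) - l then (p.1, 2 * (n : ℤ) - l - 1) else p)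

/-- the map `ρ_l : ⋃ₛ R^i_s → ⋃ₛ R^i_s ∪ {0}` -/
def rho (t : Bool) (n : ℕ) (i l : ℤ) (L : List (ℤ × ℤ)) : Option (List (ℤ × ℤ)) :=
  if condC t n i l L then some (rhoRaw i l L)
  else if condD t n i l L then some (barDown n l L)
  else none

/-- validity of an element of `𝓡^∞` -/
def ValidR (t : Bool) (n : ℕ) (c : RSeq) : Prop :=
  ∀ q ∈ c, 1 ≤ q.1 ∧ q.1 ≤ (n : ℤ) ∧ InR t n q.1 q.2

/-- `σ^j_l = a^j_l + b^j_l` -/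
def sigmaStat (t : Bool) (n : ℕ) (l : ℤ) (c : RSeq) (j : ℕ) : ℕ :=
  (c.take (j - 1)).countP (fun q => decide (condA t n q.1 l q.2 ∨ condB t n q.1 l q.2)) +
  (c.take (j - 1)).countP (fun q => decide (condA' t n q.1 l q.2))

/-- `τ^j_l = c^j_l + d^j_l` -/
def tauStat (t : Bool) (n : ℕ) (l : ℤ) (c : RSeq) (j : ℕ) : ℕ :=
  ((c.take j).drop 1).countP (fun q => decide (condC t n q.1 l q.2 ∨ condD t n q.1 l q.2)) +
  ((c.take j).drop 1).countP (fun q => decide (condD' t n q.1 l q.2))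

/-- `σ^j_l - τ^j_l` -/
def dstat (t : Bool) (n : ℕ) (l : ℤ) (c : RSeq) (j : ℕ) : ℤ :=
  (sigmaStat t n l c j : ℤ) - (tauStat t n l c j : ℤ)

/-- `min {σ^j_l - τ^j_l | 1 ≤ j ≤ k}` -/
def minStat (t : Bool) (n : ℕ) (l : ℤ) (c : RSeq) : ℤ :=
  ((List.range c.length).map (fun j => dstat t n l c (j + 1))).foldr min (dstat t n l c 1)

/-- `f_l(x)`: the largest position attaining the minimum of `σ^j_l - τ^j_l` -/
def fpos (t : Bool) (n : ℕ) (l : ℤ) (c : RSeq) : ℕ :=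
  sSup {p : ℕ | 1 ≤ p ∧ p ≤ c.length ∧ dstat t n l c p = minStat t n l c}

/-- `e_l(x)`: the smallest position attaining the minimum of `σ^j_l - τ^j_l` -/
def epos (t : Bool) (n : ℕ) (l : ℤ) (c : RSeq) : ℕ :=
  sInf {p : ℕ | 1 ≤ p ∧ p ≤ c.length ∧ dstat t n l c p = minStat t n l c}

/-- the Kashiwara operator `f̃_l` on `𝓡^∞`: apply `θ_l` at position `f_l(x)` -/
def ftil (t : Bool) (n : ℕ) (l : ℤ) (c : RSeq) : Option RSeq :=
  (GetElem?.getElem? c (fpos t n l c - 1)).bind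
    (fun q => (theta t n q.1 l q.2).map (fun y => c.set (fpos t n l c - 1) (q.1, y)))

/-- the Kashiwara operator `ẽ_l` on `𝓡^∞`: apply `ρ_l` at position `e_l(x)` -/
def etil (t : Bool) (n : ℕ) (l : ℤ) (c : RSeq) : Option RSeq :=
  (GetElem?.getElem? c (epos t n l c - 1)).bind
    (fun q => (rho t n q.1 l q.2).map (fun y => c.set (epos t n l c - 1) (q.1, y)))

/-- the Cartan matrix entry `⟨α_a^∨, α_b⟩` of type `Aₙ` (`t = false`) or `Cₙ` (`t = true`) -/
def cartan (t : Bool) (n : ℕ) (a b : ℤ) : ℤ :=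
  if a = b then 2
  else if b = a + 1 then (if t = true ∧ b = (n : ℤ) then -2 else -1)
  else if b = a - 1 then -1 else 0

/-- the coefficient of `ω_m` in the positive root `α_{a,b}` (here `b > n` encodes the
barred letter `bar (2n - b)`, so `α_{a, bar j} = α_a + ⋯ + α_n + α_{n-1} + ⋯ + α_j`). -/
def rootCoeff (t : Bool) (n : ℕ) (a b m : ℤ) : ℤ :=
  (∑ x ∈ Finset.Icc a (min b (n : ℤ)), cartan t n m x) +
  (if (n : ℤ) < b then ∑ x ∈ Finset.Icc (2 * (n : ℤ) - b) ((n : ℤ) - 1), cartan t n m x else 0)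

/-- the coefficient of `ω_m` in the weight of a component `(i, L)`:
`ω_i - ∑_j α_{i_j, i_j'}` -/
def wtComp (t : Bool) (n : ℕ) (q : ℤ × List (ℤ × ℤ)) (m : ℤ) : ℤ :=
  (if m = q.1 then 1 else 0) - ((q.2.map (fun p => rootCoeff t n p.1 p.2 m)).sum)

/-- the coefficient of `ω_m` in `wt(x)` for `x ∈ 𝓡^∞` -/
def wtR (t : Bool) (n : ℕ) (c : RSeq) (m : ℤ) : ℤ :=
  (c.map (fun q => wtComp t n q m)).sum

/-- `ε_l(x) = τ²_l((∅₁, x_{q₁}, 0, …)) - min_j (σ^j_l - τ^j_l)` -/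
def epsStat (t : Bool) (n : ℕ) (l : ℤ) (c : RSeq) : ℤ :=
  (tauStat t n l (((1 : ℤ), ([] : List (ℤ × ℤ))) :: c) 2 : ℤ) - minStat t n l c

/-- `φ_l(x) = σ^{k+1}_l(x) - τ^k_l(x) - min_j (σ^j_l - τ^j_l)` -/
def phiStat (t : Bool) (n : ℕ) (l : ℤ) (c : RSeq) : ℤ :=
  (sigmaStat t n l c (c.length + 1) : ℤ) - (tauStat t n l c c.length : ℤ) - minStat t n l c

/-- iterates of `ẽ_l` -/
def eIter (t : Bool) (n : ℕ) (l : ℤ) (k : ℕ) (c : RSeq) : Option RSeq :=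
  (fun o => o.bind (etil t n l))^[k] (some c)

/-- iterates of `f̃_l` -/
def fIter (t : Bool) (n : ℕ) (l : ℤ) (k : ℕ) (c : RSeq) : Option RSeq :=
  (fun o => o.bind (ftil t n l))^[k] (some c)

/-- one Kashiwara step (in either direction); connected components of `𝓡^∞` are the
equivalence classes of the reflexive-transitive closure of this relation. -/
def KStep (t : Bool) (n : ℕ) (c c' : RSeq) : Prop :=
  ∃ l : ℤ, 1 ≤ l ∧ l ≤ (n : ℤ) ∧ (ftil t n l c = some c' ∨ etil t n l c = some c')

/-- the list `1^{m_1} 2^{m_2} ⋯ n^{m_n}` of superscripts of `r_λ` for `λ = ∑ m_i ω_i` -/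
def typeList (n : ℕ) (m : ℤ → ℕ) : List ℤ :=
  (List.range n).flatMap (fun a => List.replicate (m ((a : ℤ) + 1)) ((a : ℤ) + 1))

/-- the highest weight element `r_λ = (∅₁^{m₁}, …, ∅ₙ^{mₙ}, 0, …)` -/
def rlam (n : ℕ) (m : ℤ → ℕ) : RSeq := (typeList n m).map (fun i => (i, []))

/-- `𝓡(λ)`: the connected component of `𝓡^∞` containing `r_λ` -/
def Rlam (t : Bool) (n : ℕ) (m : ℤ → ℕ) (c : RSeq) : Prop :=
  Relation.ReflTransGen (KStep t n) (rlam n m) c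

/-- the `k`-th first entry `i_k` (1-based), as an `Option` -/
def fIdx (L : List (ℤ × ℤ)) (k : ℤ) : Option ℤ :=
  if 1 ≤ k then (L[k.toNat - 1]?).map Prod.fst else none

/-- the `k`-th second entry `i'_k` (1-based), as an `Option` -/
def sIdx (L : List (ℤ × ℤ)) (k : ℤ) : Option ℤ :=
  if 1 ≤ k then (L[k.toNat - 1]?).map Prod.snd else none

/-- conditions (1) i)–iii) on an adjacent pair `(x_q, x_{q+1})`,
`x_q = (i₁,i₁')⋯(i_s,i_s') ∈ R^i_s`, `x_{q+1} = (j₁,j₁')⋯(j_t,j_t') ∈ R^j_t`. -/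
def cond1 (i : ℤ) (L1 : List (ℤ × ℤ)) (j : ℤ) (L2 : List (ℤ × ℤ)) : Prop :=
  -- i) `#{i_k | 1 ≤ i_k ≤ j_{t-p}} ≥ p+1` for `0 ≤ p ≤ u = max{0 ≤ r ≤ t-1 | j_{t-r} ≤ i}`
  (∀ p : ℕ, (p : ℤ) ≤ (L2.length : ℤ) - 1 →
    ∀ jv, fIdx L2 ((L2.length : ℤ) - p) = some jv → jv ≤ i →
      ((p : ℤ) + 1 ≤ (L1.countP (fun q => decide (1 ≤ q.1 ∧ q.1 ≤ jv)) : ℤ))) ∧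
  -- ii) `j_{t-p} ≤ i'_{j_{t-p} - p + s - i}` for `p ∈ {u+1 ≤ r ≤ t-1 | j_{t-r} ≤ r + i}`
  (∀ p : ℕ, (p : ℤ) ≤ (L2.length : ℤ) - 1 →
    ∀ jv, fIdx L2 ((L2.length : ℤ) - p) = some jv → i < jv → jv ≤ (p : ℤ) + i →
      ∃ v, sIdx L1 (jv - p + L1.length - i) = some v ∧ jv ≤ v) ∧
  -- iii) `j'_p ≤ i'_{j - i + s - t + p}` for `1 ≤ p ≤ i - j + t`
  (∀ p : ℕ, 1 ≤ p → (p : ℤ) ≤ i - j + L2.length →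
    ∀ jv, sIdx L2 p = some jv →
      ∃ v, sIdx L1 (j - i + L1.length - L2.length + p) = some v ∧ jv ≤ v)

/-- condition (2): there is no pair `(∅_i, x_{q+1} ≠ ∅_j)` with `i ≥ j_t` -/
def cond2 (i : ℤ) (L1 : List (ℤ × ℤ)) (L2 : List (ℤ × ℤ)) : Prop :=
  L1 = [] → ∀ p, L2.getLast? = some p → i < p.1

/-- an adjacent pair satisfying the type `A` conditions (1) and (2) -/
def pairOkA (i : ℤ) (L1 : List (ℤ × ℤ)) (j : ℤ) (L2 : List (ℤ × ℤ)) : Prop :=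
  (L1 ≠ [] → L2 ≠ [] → cond1 i L1 j L2) ∧ cond2 i L1 L2

/-- the exclusion condition `bar v - δ ∉ (1-δ)·{firsts} ∪ δ·(I ∖ {seconds})`
of conditions (3)(a),(b) and (4)(a),(b), where `δ = δ_{bar v ∈ {i+1,…,n}}`. -/
def excl (n : ℕ) (i : ℤ) (L : List (ℤ × ℤ)) (v : ℤ) : Prop :=
  ((i < 2 * (n : ℤ) - v ∧ 2 * (n : ℤ) - v ≤ (n : ℤ)) →
    ((1 ≤ 2 * (n : ℤ) - v - 1 ∧ 2 * (n : ℤ) - v - 1 ≤ 2 * (n : ℤ) - 1) →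
      2 * (n : ℤ) - v - 1 ∈ seconds L)) ∧
  (¬(i < 2 * (n : ℤ) - v ∧ 2 * (n : ℤ) - v ≤ (n : ℤ)) → 2 * (n : ℤ) - v ∉ firsts L)

/-- the forbidden configuration of condition (3) of Theorem `char2` -/
def cond3 (n : ℕ) (i : ℤ) (L1 : List (ℤ × ℤ)) (j : ℤ) (L2 : List (ℤ × ℤ)) : Prop :=
  ∃ p r : ℕ, 1 ≤ r ∧ r ≤ p ∧ p ≤ L1.length ∧
    ∃ vp vr : ℤ, sIdx L1 (p : ℤ) = some vp ∧ sIdx L1 (r : ℤ) = some vr ∧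
      (n : ℤ) ≤ vr ∧ vr ≤ vp ∧
      excl n i L1 vr ∧ excl n j L2 vp ∧
      ((p : ℤ) - (r : ℤ)
        + (L2.countP (fun q => decide (q.1 < 2 * (n : ℤ) - vp)) : ℤ)
        - (L1.countP (fun q => decide (q.1 < 2 * (n : ℤ) - vr)) : ℤ)
        + (L1.countP (fun q => decide (q.2 < 2 * (n : ℤ) - vr)) : ℤ)
        - (L2.countP (fun q => decide (q.2 < 2 * (n : ℤ) - vp)) : ℤ)
        ≥ max 0 (2 * (n : ℤ) - vr - i) - max 0 (2 * (n : ℤ) - vp - j))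

/-- the forbidden configuration of condition (4) of Theorem `char2` -/
def cond4 (n : ℕ) (i : ℤ) (L1 : List (ℤ × ℤ)) (j : ℤ) (L2 : List (ℤ × ℤ)) : Prop :=
  ∃ p r : ℕ, 1 ≤ p ∧ p ≤ L1.length ∧ 1 ≤ r ∧ r ≤ L2.length ∧
    ∃ vp vr : ℤ, sIdx L1 (p : ℤ) = some vp ∧ sIdx L2 (r : ℤ) = some vr ∧
      (n : ℤ) ≤ vr ∧ vr ≤ vp ∧
      excl n j L2 vp ∧ excl n j L2 vr ∧
      ((i - j) + ((L2.length : ℤ) - (L1.length : ℤ)) + ((p : ℤ) - (r : ℤ))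
        + (L2.countP (fun q => decide (2 * (n : ℤ) - vp ≤ q.2 ∧ q.2 < 2 * (n : ℤ) - vr)) : ℤ)
        - (L2.countP (fun q => decide (2 * (n : ℤ) - vp ≤ q.1 ∧ q.1 < 2 * (n : ℤ) - vr)) : ℤ)
        ≥ max 0 (2 * (n : ℤ) - vr - j) - max 0 (2 * (n : ℤ) - vp - j))

/-- an adjacent pair satisfying the type `C` conditions (1)–(4) -/
def pairOkC (n : ℕ) (i : ℤ) (L1 : List (ℤ × ℤ)) (j : ℤ) (L2 : List (ℤ × ℤ)) : Prop :=
  pairOkA i L1 j L2 ∧ (L1 ≠ [] → ¬ cond3 n i L1 j L2) ∧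
  (L1 ≠ [] → L2 ≠ [] → ¬ cond4 n i L1 j L2)

/-- the explicit description of `𝓡(λ)` in type `Aₙ` (Theorem `char`) -/
def MemA (n : ℕ) (m : ℤ → ℕ) (c : RSeq) : Prop :=
  c.map Prod.fst = typeList n m ∧ ValidR false n c ∧
  List.Chain' (fun a b => pairOkA a.1 a.2 b.1 b.2) c

/-- the explicit description of `𝓡(λ)` in type `Cₙ` (Theorem `char2`) -/
def MemC (n : ℕ) (m : ℤ → ℕ) (c : RSeq) : Prop :=
  c.map Prod.fst = typeList n m ∧ ValidR true n c ∧
  List.Chain' (fun a b => pairOkC n a.1 a.2 b.1 b.2) c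

/-- `f̃_l` on a single component -/
def fC (t : Bool) (n : ℕ) (l : ℤ) (q : ℤ × List (ℤ × ℤ)) : Option (ℤ × List (ℤ × ℤ)) :=
  (theta t n q.1 l q.2).map (fun y => (q.1, y))

/-- `ẽ_l` on a single component -/
def eC (t : Bool) (n : ℕ) (l : ℤ) (q : ℤ × List (ℤ × ℤ)) : Option (ℤ × List (ℤ × ℤ)) :=
  (rho t n q.1 l q.2).map (fun y => (q.1, y))

/-- `f̃_l` on a tensor product `𝓡' ⊗ (single component)` (tensor product rule) -/
def tensF (t : Bool) (n : ℕ) (l : ℤ) (b : RSeq × (ℤ × List (ℤ × ℤ))) :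
    Option (RSeq × (ℤ × List (ℤ × ℤ))) :=
  if epsStat t n l [b.2] < phiStat t n l b.1 then (ftil t n l b.1).map (fun y => (y, b.2))
  else (fC t n l b.2).map (fun y => (b.1, y))

/-- `ẽ_l` on a tensor product `𝓡' ⊗ (single component)` (tensor product rule) -/
def tensE (t : Bool) (n : ℕ) (l : ℤ) (b : RSeq × (ℤ × List (ℤ × ℤ))) :
    Option (RSeq × (ℤ × List (ℤ × ℤ))) :=
  if epsStat t n l [b.2] ≤ phiStat t n l b.1 then (etil t n l b.1).map (fun y => (y, b.2))
  else (eC t n l b.2).map (fun y => (b.1, y))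

/-- `φ_l` of the tensor product -/
def tensPhi (t : Bool) (n : ℕ) (l : ℤ) (b : RSeq × (ℤ × List (ℤ × ℤ))) : ℤ :=
  max (phiStat t n l [b.2]) (phiStat t n l b.1 + phiStat t n l [b.2] - epsStat t n l [b.2])

/-- `ε_l` of the tensor product -/
def tensEps (t : Bool) (n : ℕ) (l : ℤ) (b : RSeq × (ℤ × List (ℤ × ℤ))) : ℤ :=
  max (epsStat t n l b.1) (epsStat t n l b.1 + epsStat t n l [b.2] - phiStat t n l b.1)

/-- the map `η : 𝓡(ω_i) → 𝓡(ω_{i-1}) ⊗ 𝓡(ω_1)` of Theorem 6.1 (type `Cₙ`) -/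
def eta (i : ℤ) (L : List (ℤ × ℤ)) : List (ℤ × ℤ) × List (ℤ × ℤ) :=
  match L with
  | [] => ([], [(1, i - 1)])
  | (a, b) :: rest =>
      ((if a = i then [] else [(a, i - 1)]) ++ (rest.map Prod.fst).zip (b :: rest.map Prod.snd),
       [(1, (rest.getLastD (a, b)).2)])

/-- `η` viewed as landing in the tensor product of crystals of tuples -/
def etaT (i : ℤ) (L : List (ℤ × ℤ)) : RSeq × (ℤ × List (ℤ × ℤ)) :=
  ([(i - 1, (eta i L).1)], (1, (eta i L).2))

end CrystalSeq

namespace S12Aux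

open CrystalSeq List

/-! ### Type-`A` simplifications (`t = false`) -/

lemma not_condB {n : ℕ} {i l : ℤ} {L : List (ℤ × ℤ)} : ¬ condB false n i l L :=
  fun h => Bool.false_ne_true h.1

lemma not_condA' {n : ℕ} {i l : ℤ} {L : List (ℤ × ℤ)} : ¬ condA' false n i l L :=
  fun h => Bool.false_ne_true h.1

lemma not_condD {n : ℕ} {i l : ℤ} {L : List (ℤ × ℤ)} : ¬ condD false n i l L :=
  fun h => Bool.false_ne_true h.1

lemma not_condD' {n : ℕ} {i l : ℤ} {L : List (ℤ × ℤ)} : ¬ condD' false n i l L :=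
  fun h => Bool.false_ne_true h.1

lemma sigma_eq {n : ℕ} {l : ℤ} {c : RSeq} (j : ℕ) :
    sigmaStat false n l c j =
      (c.take (j - 1)).countP (fun q => decide (condA false n q.1 l q.2)) := by
  unfold sigmaStat
  have h2 : (c.take (j - 1)).countP (fun q => decide (condA' false n q.1 l q.2)) = 0 :=
    List.countP_eq_zero.2 (fun q _ => by simp [not_condA'])
  have h1 : (c.take (j - 1)).countP
      (fun q => decide (condA false n q.1 l q.2 ∨ condB false n q.1 l q.2)) =
      (c.take (j - 1)).countP (fun q => decide (condA false n q.1 l q.2)) :=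
    List.countP_congr (fun q _ => by simp [not_condB])
  omega

lemma tau_eq {n : ℕ} {l : ℤ} {c : RSeq} (j : ℕ) :
    tauStat false n l c j =
      ((c.take j).drop 1).countP (fun q => decide (condC false n q.1 l q.2)) := by
  unfold tauStat
  have h2 : ((c.take j).drop 1).countP (fun q => decide (condD' false n q.1 l q.2)) = 0 :=
    List.countP_eq_zero.2 (fun q _ => by simp [not_condD'])
  have h1 : ((c.take j).drop 1).countP
      (fun q => decide (condC false n q.1 l q.2 ∨ condD false n q.1 l q.2)) =
      ((c.take j).drop 1).countP (fun q => decide (condC false n q.1 l q.2)) :=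
    List.countP_congr (fun q _ => by simp [not_condD])
  omega

lemma dstat_one {n : ℕ} {l : ℤ} {c : RSeq} : dstat false n l c 1 = 0 := by
  simp [dstat, sigma_eq, tau_eq, List.drop_take]

lemma take_drop_step {c : RSeq} {j : ℕ} (h1 : 1 ≤ j) (h2 : j < c.length) :
    (c.take (j + 1)).drop 1 = (c.take j).drop 1 ++ [c.get ⟨j, h2⟩] := by
  rw [List.take_succ, List.getElem?_eq_getElem h2]
  rw [List.drop_append_of_le_length (by simp [List.length_take]; omega)]
  rfl

lemma sigma_mono {n : ℕ} {l : ℤ} {c : RSeq} (j : ℕ) :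
    sigmaStat false n l c j ≤ sigmaStat false n l c (j + 1) := by
  rw [sigma_eq, sigma_eq]
  have : c.take (j - 1) = (c.take (j + 1 - 1)).take (j - 1) := by
    rw [List.take_take]; congr 1; omega
  rw [this]
  exact List.Sublist.countP_le (List.take_sublist _ _)

lemma tau_succ {n : ℕ} {l : ℤ} {c : RSeq} {j : ℕ} (h1 : 1 ≤ j) (h2 : j < c.length) :
    tauStat false n l c (j + 1) =
      tauStat false n l c j +
        (if condC false n (c.get ⟨j, h2⟩).1 l (c.get ⟨j, h2⟩).2 then 1 else 0) := by
  rw [tau_eq, tau_eq, take_drop_step h1 h2, List.countP_append]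
  simp only [List.get_eq_getElem, List.countP_cons, List.countP_nil, decide_eq_true_eq]
  split <;> simp_all

lemma descent_condC {n : ℕ} {l : ℤ} {c : RSeq} {j : ℕ} (h1 : 1 ≤ j) (h2 : j < c.length)
    (hlt : dstat false n l c (j + 1) < dstat false n l c j) :
    condC false n (c.get ⟨j, h2⟩).1 l (c.get ⟨j, h2⟩).2 := by
  have hs := sigma_mono (n := n) (l := l) (c := c) j
  have ht := tau_succ (n := n) (l := l) (c := c) h1 h2
  unfold dstat at hlt
  by_contra hC
  rw [if_neg hC] at ht
  omega

/-! ### `minStat` facts -/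

lemma foldr_min_le_base (b : ℤ) (L : List ℤ) : L.foldr min b ≤ b := by
  induction L with
  | nil => exact le_rfl
  | cons x xs ih => exact le_trans (min_le_right _ _) ih

lemma foldr_min_le_mem {b x : ℤ} {L : List ℤ} (hx : x ∈ L) : L.foldr min b ≤ x := by
  induction L with
  | nil => cases hx
  | cons y ys ih =>
    rcases List.mem_cons.1 hx with rfl | hx'
    · exact min_le_left _ _
    · exact le_trans (min_le_right _ _) (ih hx')

lemma foldr_min_eq_or_mem (b : ℤ) (L : List ℤ) :
    L.foldr min b = b ∨ L.foldr min b ∈ L := by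
  induction L with
  | nil => exact Or.inl rfl
  | cons y ys ih =>
    rcases min_choice y (ys.foldr min b) with h | h
    · exact Or.inr (by rw [List.foldr_cons, h]; exact List.mem_cons_self)
    · rcases ih with h' | h'
      · exact Or.inl (by rw [List.foldr_cons, h, h'])
      · exact Or.inr (by rw [List.foldr_cons, h]; exact List.mem_cons_of_mem _ h')

lemma minStat_le {n : ℕ} {l : ℤ} {c : RSeq} {j : ℕ} (h1 : 1 ≤ j) (h2 : j ≤ c.length) :
    minStat false n l c ≤ dstat false n l c j := by
  obtain ⟨j', rfl⟩ : ∃ j', j = j' + 1 := ⟨j - 1, by omega⟩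
  exact foldr_min_le_mem (List.mem_map.2 ⟨j', List.mem_range.2 (by omega), rfl⟩)

lemma minStat_attained {n : ℕ} {l : ℤ} {c : RSeq} (hc : c ≠ []) :
    ∃ j, 1 ≤ j ∧ j ≤ c.length ∧ dstat false n l c j = minStat false n l c := by
  have hlen : 0 < c.length := List.length_pos_iff.2 hc
  rcases foldr_min_eq_or_mem (dstat false n l c 1)
      ((List.range c.length).map (fun j => dstat false n l c (j + 1))) with h | h
  · exact ⟨1, le_rfl, hlen, h.symm⟩
  · obtain ⟨j', hj', heq⟩ := List.mem_map.1 h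
    exact ⟨j' + 1, by omega, by have := List.mem_range.1 hj'; omega, heq⟩

/-! ### consequences of `ẽ_l x = 0` -/

lemma hw_facts {n : ℕ} {l : ℤ} {c : RSeq} (hc : c ≠ [])
    (hnone : etil false n l c = none) :
    (∀ j, 1 ≤ j → j ≤ c.length → 0 ≤ dstat false n l c j) ∧
    ∀ h0 : 0 < c.length, ¬ condC false n (c.get ⟨0, h0⟩).1 l (c.get ⟨0, h0⟩).2 := by
  have hlen : 0 < c.length := List.length_pos_iff.2 hc
  set S : Set ℕ :=
    {p : ℕ | 1 ≤ p ∧ p ≤ c.length ∧ dstat false n l c p = minStat false n l c} with hS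
  have hSne : S.Nonempty := by
    obtain ⟨j, hj1, hj2, hj3⟩ := minStat_attained (n := n) (l := l) hc
    exact ⟨j, hj1, hj2, hj3⟩
  have hmem : sInf S ∈ S := Nat.sInf_mem hSne
  have hepos : epos false n l c = sInf S := rfl
  obtain ⟨he1, he2, he3⟩ := hmem
  have hidx : sInf S - 1 < c.length := by omega
  have hget : GetElem?.getElem? c (epos false n l c - 1) = some (c.get ⟨sInf S - 1, hidx⟩) := by
    rw [hepos, List.getElem?_eq_getElem hidx]; rfl
  have hrho : rho false n (c.get ⟨sInf S - 1, hidx⟩).1 l (c.get ⟨sInf S - 1, hidx⟩).2 = none := by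
    unfold etil at hnone
    rw [hget] at hnone
    rcases hrho' : rho false n (c.get ⟨sInf S - 1, hidx⟩).1 l (c.get ⟨sInf S - 1, hidx⟩).2 with _ | y
    · rfl
    · rw [Option.bind_some, hrho', Option.map_some] at hnone; cases hnone
  have hnotC : ¬ condC false n (c.get ⟨sInf S - 1, hidx⟩).1 l (c.get ⟨sInf S - 1, hidx⟩).2 := by
    intro hcC
    unfold rho at hrho
    rw [if_pos hcC] at hrho
    cases hrho
  have hminle : minStat false n l c ≤ 0 := by
    have := minStat_le (n := n) (l := l) (c := c) le_rfl hlen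
    rw [dstat_one] at this; exact this
  have hmin0 : minStat false n l c = 0 := by
    by_contra hne
    have hneg : minStat false n l c < 0 := lt_of_le_of_ne hminle hne
    have he2' : 2 ≤ sInf S := by
      by_contra hcon
      have h1 : sInf S = 1 := by omega
      rw [h1, dstat_one] at he3
      omega
    have hnotS : sInf S - 1 ∉ S := Nat.notMem_of_lt_sInf (by omega)
    have hne' : dstat false n l c (sInf S - 1) ≠ minStat false n l c := by
      intro h; exact hnotS ⟨by omega, by omega, h⟩
    have hgt : dstat false n l c (sInf S) < dstat false n l c (sInf S - 1) := by
      have hle := minStat_le (n := n) (l := l) (c := c)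
        (j := sInf S - 1) (by omega) (by omega)
      rw [he3]
      omega
    have hstep : dstat false n l c ((sInf S - 1) + 1) < dstat false n l c (sInf S - 1) := by
      have : (sInf S - 1) + 1 = sInf S := by omega
      rw [this]; exact hgt
    exact hnotC (descent_condC (by omega) (by omega) hstep)
  constructor
  · intro j hj1 hj2
    have := minStat_le (n := n) (l := l) (c := c) hj1 hj2
    omega
  · intro h0
    have h1S : (1 : ℕ) ∈ S := ⟨le_rfl, hlen, by rw [dstat_one, hmin0]⟩
    have he : sInf S = 1 := le_antisymm (Nat.sInf_le h1S) he1
    intro hC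
    apply hnotC
    have hfin : (⟨sInf S - 1, hidx⟩ : Fin c.length) = ⟨0, h0⟩ := by
      ext; simp [he]
    rw [hfin]
    exact hC

/-! ### choosing the letter for a nonempty component -/

lemma condA_nil {n : ℕ} {i l : ℤ} (h : condA false n i l []) : l = i := by
  obtain ⟨-, -, h3, h4, -⟩ := h
  simp [firsts, seconds] at h3 h4
  omega

lemma head_bounds {a b : ℤ} {tl : List (ℤ × ℤ)}
    (hch : List.Chain' (fun p q : ℤ × ℤ => q.1 < p.1 ∧ p.2 < q.2) ((a, b) :: tl)) :
    ∀ p ∈ tl, p.1 < a ∧ b < p.2 := by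
  haveI : IsTrans (ℤ × ℤ) (fun p q : ℤ × ℤ => q.1 < p.1 ∧ p.2 < q.2) :=
    ⟨fun x y z h1 h2 => ⟨lt_trans h2.1 h1.1, lt_trans h1.2 h2.2⟩⟩
  have hp := List.isChain_iff_pairwise.1 hch
  exact fun p hp' => (List.pairwise_cons.1 hp).1 p hp'

lemma choose_l {n : ℕ} {i a b : ℤ} {tl : List (ℤ × ℤ)}
    (hInR : InR false n i ((a, b) :: tl)) :
    ∃ l : ℤ, 1 ≤ l ∧ l ≤ (n : ℤ) ∧ condC false n i l ((a, b) :: tl) ∧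
      ((l = a ∧ a ≤ i) ∨ (a = i ∧ i < b ∧ l = b)) := by
  obtain ⟨hch, hbd⟩ := hInR
  have hhead := hbd (a, b) (List.mem_cons_self)
  simp only [if_neg (Bool.false_ne_true)] at hhead
  obtain ⟨ha1, hai, hib, hbn, -⟩ := hhead
  have hall := head_bounds hch
  by_cases hailt : a < i
  · refine ⟨a, by omega, by omega, ⟨?_, ?_, ?_, ?_, fun h => absurd h Bool.false_ne_true⟩,
      Or.inl ⟨rfl, by omega⟩⟩
    · exact Or.inl (List.mem_map.2 ⟨(a, b), List.mem_cons_self, rfl⟩)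
    · intro _ hm
      obtain ⟨p, hp, hpe⟩ := List.mem_map.1 hm
      rcases List.mem_cons.1 hp with rfl | hp'
      · omega
      · have := (hall p hp').1; omega
    · intro h; omega
    · intro h; omega
  · have hae : a = i := by omega
    by_cases hbi : i < b
    · refine ⟨b, by omega, by omega, ⟨?_, ?_, ?_, ?_, fun h => absurd h Bool.false_ne_true⟩,
        Or.inr ⟨hae, hbi, rfl⟩⟩
      · exact Or.inr (List.mem_map.2 ⟨(a, b), List.mem_cons_self, rfl⟩)
      · intro h; omega
      · intro _ hm
        obtain ⟨p, hp, hpe⟩ := List.mem_map.1 hm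
        rcases List.mem_cons.1 hp with rfl | hp'
        · omega
        · have := (hall p hp').2; omega
      · intro h; omega
    · have hbe : b = i := by omega
      refine ⟨i, by omega, by omega, ⟨?_, ?_, ?_, ?_, fun h => absurd h Bool.false_ne_true⟩,
        Or.inl ⟨hae.symm, le_of_eq hae⟩⟩
      · exact Or.inl (List.mem_map.2 ⟨(a, b), List.mem_cons_self, by simp [hae]⟩)
      · intro h; omega
      · intro h; omega
      · intro _; rw [hae, hbe]; rfl

/-! ### sortedness of the superscripts -/

lemma typeList_pairwise (n : ℕ) (m : ℤ → ℕ) :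
    List.Pairwise (· ≤ ·) (typeList n m) := by
  unfold typeList
  rw [List.flatMap_def, List.pairwise_flatten]
  constructor
  · intro L hL
    obtain ⟨a, -, rfl⟩ := List.mem_map.1 hL
    rw [List.pairwise_iff_getElem]
    intro i j hi hj hij
    rw [List.getElem_replicate, List.getElem_replicate]
  · rw [List.pairwise_map]
    simp only [List.pure_def, List.bind_eq_flatMap, ← List.map_eq_flatMap, List.pairwise_map]
    refine (List.pairwise_lt_range).imp ?_
    intro a b hab x hx y hy
    rw [List.mem_replicate] at hx hy
    have : (a : ℤ) < (b : ℤ) := by exact_mod_cast hab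
    omega

end S12Aux

open CrystalSeq in
/-- uniqueness of the highest weight element in type `A`: if
`x = (x₁, …, x_k, 0, …) ∈ 𝓡(λ)` (characterised by conditions (1) i)–iii) and (2) of
Theorem `char`) satisfies `ẽ_l x = 0` for all `l ∈ I`, then `x = r_λ`. -/
theorem statement12 (n : ℕ) (hn : 1 ≤ n) (m : ℤ → ℕ) (c : RSeq)
    (h : MemA n m c)
    (hw : ∀ l : ℤ, 1 ≤ l → l ≤ (n : ℤ) → etil false n l c = none) :
    c = rlam n m := by
  obtain ⟨hmap, hval, hchain⟩ := h
  have hpw : List.Pairwise (fun p q : ℤ × List (ℤ × ℤ) => p.1 ≤ q.1) c := by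
    have hp := S12Aux.typeList_pairwise n m
    rw [← hmap, List.pairwise_map] at hp
    exact hp
  have hmono : ∀ (q1 q2 : ℕ) (h1 : q1 < c.length) (h2 : q2 < c.length), q1 ≤ q2 →
      (c.get ⟨q1, h1⟩).1 ≤ (c.get ⟨q2, h2⟩).1 := by
    intro q1 q2 h1 h2 h12
    rcases eq_or_lt_of_le h12 with rfl | hlt
    · exact le_rfl
    · exact List.pairwise_iff_getElem.1 hpw q1 q2 h1 h2 hlt
  have hempty : ∀ r, ∀ hr : r < c.length, (c.get ⟨r, hr⟩).2 = [] := by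
    intro r
    induction r using Nat.strong_induction_on with
    | _ r IH =>
      intro hr
      by_contra hne
      obtain ⟨⟨a, b⟩, tl, hab⟩ := List.exists_cons_of_ne_nil hne
      obtain ⟨hi1, hin, hInR⟩ := hval (c.get ⟨r, hr⟩) (List.get_mem c ⟨r, hr⟩)
      rw [hab] at hInR
      obtain ⟨l, hl1, hln, hcondC0, hcase⟩ := S12Aux.choose_l hInR
      have hcondC : condC false n (c.get ⟨r, hr⟩).1 l (c.get ⟨r, hr⟩).2 := by
        rw [hab]; exact hcondC0
      have hcne : c ≠ [] := List.ne_nil_of_length_pos (by omega)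
      obtain ⟨F1, F2⟩ := S12Aux.hw_facts hcne (hw l hl1 hln)
      rcases Nat.eq_zero_or_pos r with rfl | hrpos
      · exact F2 hr hcondC
      · obtain ⟨r', rfl⟩ : ∃ r', r = r' + 1 := ⟨r - 1, by omega⟩
        have hd := F1 (r' + 1 + 1) (by omega) (by omega)
        have htau : 1 ≤ tauStat false n l c (r' + 1 + 1) := by
          rw [S12Aux.tau_eq]
          refine List.countP_pos_iff.2 ⟨c.get ⟨r' + 1, hr⟩, ?_, ?_⟩
          · rw [S12Aux.take_drop_step (by omega) hr]
            exact List.mem_append_right _ (List.mem_singleton.2 rfl)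
          · exact decide_eq_true hcondC
        have hsig : 1 ≤ sigmaStat false n l c (r' + 1 + 1) := by
          unfold dstat at hd; omega
        rw [S12Aux.sigma_eq] at hsig
        obtain ⟨q, hqmem, hqA⟩ := List.countP_pos_iff.1 hsig
        obtain ⟨idx, hidxlt, hidxeq⟩ := List.mem_iff_getElem.1 hqmem
        have hidxr : idx < r' + 1 := by
          rw [List.length_take] at hidxlt; omega
        have hidxc : idx < c.length := lt_trans hidxr hr
        have hqc : c.get ⟨idx, hidxc⟩ = q := by
          rw [← hidxeq, List.getElem_take]
          exact List.get_eq_getElem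
        have hq2 : q.2 = [] := by rw [← hqc]; exact IH idx hidxr hidxc
        have hA : condA false n q.1 l [] := hq2 ▸ of_decide_eq_true hqA
        have hlq : l = q.1 := S12Aux.condA_nil hA
        rcases hcase with ⟨hla, hai⟩ | ⟨hae, hib, hlb⟩
        · -- l = a ≤ i : contradiction via condition (2) of the chain
          have hr'lt : r' < c.length := by omega
          have haler' : a ≤ (c.get ⟨r', hr'lt⟩).1 := by
            have hle := hmono idx r' hidxc hr'lt (by omega)
            rw [hqc] at hle
            omega
          have hch2 := List.isChain_iff_getElem.1 hchain r' (by omega)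
          have hL1 : (c.get ⟨r', hr'lt⟩).2 = [] := IH r' (by omega) hr'lt
          have hlast :=
            hch2.2 hL1 (((a, b) :: tl).getLast (List.cons_ne_nil _ _))
              (by simp only [List.get_eq_getElem] at hab; rw [hab]; exact List.getLast?_eq_getLast _)
          have hpmem : ((a, b) :: tl).getLast (List.cons_ne_nil _ _) ∈ (a, b) :: tl :=
            List.getLast_mem _
          have hple : (((a, b) :: tl).getLast (List.cons_ne_nil _ _)).1 ≤ a := by
            rcases List.mem_cons.1 hpmem with hpe | hp'
            · rw [hpe]
            · exact le_of_lt (S12Aux.head_bounds hInR.1 _ hp').1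
          simp only [List.get_eq_getElem] at *
          omega
        · -- l = b > i : contradiction via monotonicity of superscripts
          have hle := hmono idx (r' + 1) hidxc hr (by omega)
          rw [hqc] at hle
          omega
  have hall2 : ∀ q ∈ c, q.2 = ([] : List (ℤ × ℤ)) := by
    intro q hq
    obtain ⟨r, hrl, hre⟩ := List.mem_iff_getElem.1 hq
    rw [← hre]
    exact hempty r hrl
  unfold rlam
  rw [← hmap, List.map_map]
  have hcongr : ∀ q ∈ c, ((fun i : ℤ => (i, ([] : List (ℤ × ℤ)))) ∘ Prod.fst) q = id q := by
    intro q hq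
    simp only [Function.comp_apply, id_eq]
    rw [← hall2 q hq]
  rw [List.map_congr_left hcongr, List.map_id]
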